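/- Let n_1, m_1, n_2, m_2 be nonzero integers and let Γ be the group with presentation ⟨a, t_1, t_2 | t_1 a^{n_1} t_1⁻¹ = a^{m_1}, t_2 a^{n_2} t_2⁻¹ = a^{m_2}⟩ (a generalised Baumslag–Solitar group over a rose with two loops). Then for every prime q, the second group cohomology H²(Γ, ZMod q) with coefficients in the trivial one-dimensional representation over 𝔽_q is nontrivial. -/

import Mathlib

/-- The relators `t_i a^{n_i} t_i⁻¹ a^{-m_i}` (for `i = 1, 2`) of a generalised
Baumslag–Solitar group over a rose with two loops, with generators `0 = a`,
`1 = t_1`, `2 = t_2`. -/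
def roseRel (n₁ m₁ n₂ m₂ : ℤ) : Set (FreeGroup (Fin 3)) :=
  {FreeGroup.of 1 * FreeGroup.of 0 ^ n₁ * (FreeGroup.of 1)⁻¹ * FreeGroup.of 0 ^ (-m₁),
   FreeGroup.of 2 * FreeGroup.of 0 ^ n₂ * (FreeGroup.of 2)⁻¹ * FreeGroup.of 0 ^ (-m₂)}

/-- The generalised Baumslag–Solitar group over a rose with two loops, with presentation
`⟨a, t₁, t₂ ∣ t₁ a^{n₁} t₁⁻¹ = a^{m₁}, t₂ a^{n₂} t₂⁻¹ = a^{m₂}⟩`. -/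
abbrev GBSRoseTwo (n₁ m₁ n₂ m₂ : ℤ) := PresentedGroup (roseRel n₁ m₁ n₂ m₂)

namespace GBSAux

def embA (q : ℕ) (n : ℤ) (x : ZMod q) : (ℤ × ZMod q) →+ ℤ × ZMod q where
  toFun p := (n * p.1, x * (p.1 : ZMod q) + p.2)
  map_zero' := by simp
  map_add' p p' := by
    simp only [Prod.fst_add, Prod.snd_add, Prod.mk_add_mk, Prod.mk.injEq]
    push_cast
    constructor <;> ring

abbrev B (q : ℕ) := Multiplicative (ℤ × ZMod q)

def emb (q : ℕ) (n : ℤ) (x : ZMod q) : B q →* B q :=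
  AddMonoidHom.toMultiplicative (embA q n x)

lemma emb_apply (q : ℕ) (n : ℤ) (x : ZMod q) (p : ℤ × ZMod q) :
    emb q n x (Multiplicative.ofAdd p) =
      Multiplicative.ofAdd ((n * p.1, x * (p.1 : ZMod q) + p.2) : ℤ × ZMod q) := rfl

lemma emb_injective (q : ℕ) (n : ℤ) (hn : n ≠ 0) (x : ZMod q) :
    Function.Injective (emb q n x) := by
  intro p p' h
  have h1 : n * (p.toAdd).1 = n * (p'.toAdd).1 := congrArg (fun y => (Multiplicative.toAdd y).1) h
  have h2 := congrArg (fun y => (Multiplicative.toAdd y).2) h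
  have hfst : (p.toAdd).1 = (p'.toAdd).1 := mul_left_cancel₀ hn h1
  have hsnd : (p.toAdd).2 = (p'.toAdd).2 := by
    simpa [emb, embA, hfst] using h2
  exact Multiplicative.toAdd.injective (Prod.ext hfst hsnd)

noncomputable def rangeEquiv {M N P : Type*} [Group M] [Group N] [Group P]
    (f : M →* N) (g : M →* P) (hf : Function.Injective f) (hg : Function.Injective g) :
    f.range ≃* g.range :=
  (MonoidHom.ofInjective hf).symm.trans (MonoidHom.ofInjective hg)

lemma rangeEquiv_apply {M N P : Type*} [Group M] [Group N] [Group P]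
    (f : M →* N) (g : M →* P) (hf : Function.Injective f) (hg : Function.Injective g)
    (p : M) (hp : f p ∈ f.range) :
    rangeEquiv f g hf hg ⟨f p, hp⟩ = ⟨g p, ⟨p, rfl⟩⟩ := by
  have h1 : (⟨f p, hp⟩ : f.range) = MonoidHom.ofInjective hf p := by
    ext; simp [MonoidHom.ofInjective_apply]
  rw [rangeEquiv, MulEquiv.trans_apply, h1, MulEquiv.symm_apply_apply]
  ext; simp [MonoidHom.ofInjective_apply]

/-- Parameters for the construction. -/
structure Params where
  q : ℕ
  n₁ : ℤ
  m₁ : ℤ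
  n₂ : ℤ
  m₂ : ℤ
  x₁ : ZMod q
  x₂ : ZMod q
  hn₁ : n₁ ≠ 0
  hm₁ : m₁ ≠ 0
  hn₂ : n₂ ≠ 0
  hm₂ : m₂ ≠ 0

namespace Params

variable (P : Params)

noncomputable def D₁ := HNNExtension (B P.q) (emb P.q P.n₁ 0).range (emb P.q P.m₁ P.x₁).range
  (rangeEquiv _ _ (emb_injective P.q P.n₁ P.hn₁ 0) (emb_injective P.q P.m₁ P.hm₁ P.x₁))

noncomputable instance : Group P.D₁ := by delta D₁; infer_instance

noncomputable def of₁ : B P.q →* P.D₁ := HNNExtension.of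

lemma of₁_injective : Function.Injective P.of₁ := HNNExtension.of_injective _

noncomputable def tt₁ : P.D₁ := HNNExtension.t

lemma t₁_conj (p : B P.q) :
    P.tt₁ * P.of₁ (emb P.q P.n₁ 0 p) * P.tt₁⁻¹ = P.of₁ (emb P.q P.m₁ P.x₁ p) := by
  have h := HNNExtension.equiv_eq_conj
    (φ := rangeEquiv _ _ (emb_injective P.q P.n₁ P.hn₁ 0) (emb_injective P.q P.m₁ P.hm₁ P.x₁))
    ⟨emb P.q P.n₁ 0 p, ⟨p, rfl⟩⟩
  rw [rangeEquiv_apply (hp := ⟨p, rfl⟩)] at h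
  exact h.symm

noncomputable def f₂in : B P.q →* P.D₁ := P.of₁.comp (emb P.q P.n₂ 0)

noncomputable def f₂out : B P.q →* P.D₁ := P.of₁.comp (emb P.q P.m₂ P.x₂)

lemma f₂in_injective : Function.Injective P.f₂in :=
  P.of₁_injective.comp (emb_injective P.q P.n₂ P.hn₂ 0)

lemma f₂out_injective : Function.Injective P.f₂out :=
  P.of₁_injective.comp (emb_injective P.q P.m₂ P.hm₂ P.x₂)

noncomputable def D := HNNExtension P.D₁ P.f₂in.range P.f₂out.range
  (rangeEquiv _ _ P.f₂in_injective P.f₂out_injective)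

noncomputable instance : Group P.D := by delta D; infer_instance

noncomputable def of₂ : P.D₁ →* P.D := HNNExtension.of

lemma of₂_injective : Function.Injective P.of₂ := HNNExtension.of_injective _

noncomputable def tt₂ : P.D := HNNExtension.t

lemma t₂_conj (p : B P.q) :
    P.tt₂ * P.of₂ (P.of₁ (emb P.q P.n₂ 0 p)) * P.tt₂⁻¹ =
      P.of₂ (P.of₁ (emb P.q P.m₂ P.x₂ p)) := by
  have h := HNNExtension.equiv_eq_conj
    (φ := rangeEquiv _ _ P.f₂in_injective P.f₂out_injective) ⟨P.f₂in p, ⟨p, rfl⟩⟩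
  rw [rangeEquiv_apply (hp := ⟨p, rfl⟩)] at h
  exact h.symm


open Multiplicative

/-- The embedding of the base group into `P.D`. -/
noncomputable def θ : B P.q →* P.D := P.of₂.comp P.of₁

lemma θ_injective : Function.Injective P.θ := P.of₂_injective.comp P.of₁_injective

/-- The image of the generator `a` of the base. -/
noncomputable def aelt : P.D := P.θ (ofAdd ((1 : ℤ), (0 : ZMod P.q)))

/-- The two stable letters inside `P.D`. -/
noncomputable def T₁ : P.D := P.of₂ P.tt₁
noncomputable def T₂ : P.D := P.tt₂

/-- The central element of order dividing `q`, with exponents. -/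
noncomputable def ζ (c : ZMod P.q) : P.D := P.θ (ofAdd ((0 : ℤ), c))

lemma ζ_injective : Function.Injective P.ζ := by
  intro c c' h
  have := P.θ_injective h
  have := congrArg (fun y => (Multiplicative.toAdd y).2) this
  simpa using this

lemma ζ_add (c c' : ZMod P.q) : P.ζ (c + c') = P.ζ c * P.ζ c' := by
  rw [ζ, ζ, ζ, ← map_mul]
  congr 1

lemma ζ_zero : P.ζ 0 = 1 := by
  rw [ζ]
  convert map_one P.θ using 2
  rfl

lemma ζ_zpow (c : ZMod P.q) (n : ℤ) : P.ζ c ^ n = P.ζ (n • c) := by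
  rw [ζ, ζ, ← map_zpow]
  congr 1
  apply Multiplicative.toAdd.injective
  simp

lemma central₁ (c : ZMod P.q) (d : P.D₁) :
    Commute (P.of₁ (ofAdd ((0 : ℤ), c))) d := by
  refine HNNExtension.induction_on d ?_ ?_ ?_ ?_
  · intro g
    exact (Commute.all _ g).map P.of₁
  · -- commute with t
    have h := P.t₁_conj (ofAdd ((0 : ℤ), c))
    have e₁ : emb P.q P.n₁ 0 (ofAdd ((0 : ℤ), c)) = ofAdd ((0 : ℤ), c) := by
      rw [emb_apply]; norm_num
    have e₂ : emb P.q P.m₁ P.x₁ (ofAdd ((0 : ℤ), c)) = ofAdd ((0 : ℤ), c) := by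
      rw [emb_apply]; norm_num
    rw [e₁, e₂] at h
    have h2 := mul_inv_eq_iff_eq_mul.mp h
    exact h2.symm
  · intro x y hx hy
    exact hx.mul_right hy
  · intro x hx
    exact hx.inv_right

lemma central (c : ZMod P.q) (d : P.D) : Commute (P.ζ c) d := by
  refine HNNExtension.induction_on d ?_ ?_ ?_ ?_
  · intro g
    exact (P.central₁ c g).map P.of₂
  · have h := P.t₂_conj (ofAdd ((0 : ℤ), c))
    have e₁ : emb P.q P.n₂ 0 (ofAdd ((0 : ℤ), c)) = ofAdd ((0 : ℤ), c) := by
      rw [emb_apply]; norm_num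
    have e₂ : emb P.q P.m₂ P.x₂ (ofAdd ((0 : ℤ), c)) = ofAdd ((0 : ℤ), c) := by
      rw [emb_apply]; norm_num
    rw [e₁, e₂] at h
    have h2 := mul_inv_eq_iff_eq_mul.mp h
    exact h2.symm
  · intro x y hx hy
    exact hx.mul_right hy
  · intro x hx
    exact hx.inv_right

lemma aelt_zpow (n : ℤ) : P.aelt ^ n = P.θ (ofAdd ((n : ℤ), (0 : ZMod P.q))) := by
  rw [aelt, ← map_zpow]
  congr 1
  apply Multiplicative.toAdd.injective
  simp

lemma rel₁ : P.T₁ * P.aelt ^ P.n₁ * P.T₁⁻¹ * P.aelt ^ (-P.m₁) = P.ζ P.x₁ := by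
  have h := P.t₁_conj (ofAdd ((1 : ℤ), (0 : ZMod P.q)))
  have e₁ : emb P.q P.n₁ 0 (ofAdd ((1 : ℤ), (0 : ZMod P.q))) =
      ofAdd ((P.n₁ : ℤ), (0 : ZMod P.q)) := by
    rw [emb_apply]; norm_num
  have e₂ : emb P.q P.m₁ P.x₁ (ofAdd ((1 : ℤ), (0 : ZMod P.q))) =
      ofAdd ((P.m₁ : ℤ), P.x₁) := by
    rw [emb_apply]; norm_num
  rw [e₁, e₂] at h
  have h' := congrArg P.of₂ h
  simp only [map_mul, map_inv] at h'
  have hsplit : (ofAdd ((P.m₁ : ℤ), P.x₁) : B P.q) =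
      ofAdd ((P.m₁ : ℤ), (0 : ZMod P.q)) * ofAdd ((0 : ℤ), P.x₁) := by
    apply Multiplicative.toAdd.injective
    simp
  calc P.T₁ * P.aelt ^ P.n₁ * P.T₁⁻¹ * P.aelt ^ (-P.m₁)
      = (P.T₁ * P.θ (ofAdd ((P.n₁ : ℤ), (0 : ZMod P.q))) * P.T₁⁻¹) * P.aelt ^ (-P.m₁) := by
        rw [P.aelt_zpow]
    _ = P.θ (ofAdd ((P.m₁ : ℤ), P.x₁)) * P.aelt ^ (-P.m₁) := by
        rw [θ]; exact congrArg (· * P.aelt ^ (-P.m₁)) h'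
    _ = P.aelt ^ P.m₁ * P.ζ P.x₁ * P.aelt ^ (-P.m₁) := by
        rw [hsplit, map_mul, ← P.aelt_zpow]; rfl
    _ = P.aelt ^ P.m₁ * P.aelt ^ (-P.m₁) * P.ζ P.x₁ := by
        rw [mul_assoc, (P.central P.x₁ (P.aelt ^ (-P.m₁))).eq, ← mul_assoc]
    _ = P.ζ P.x₁ := by
        rw [← zpow_add, add_neg_cancel, zpow_zero, one_mul]

lemma rel₂ : P.T₂ * P.aelt ^ P.n₂ * P.T₂⁻¹ * P.aelt ^ (-P.m₂) = P.ζ P.x₂ := by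
  have h := P.t₂_conj (ofAdd ((1 : ℤ), (0 : ZMod P.q)))
  have e₁ : emb P.q P.n₂ 0 (ofAdd ((1 : ℤ), (0 : ZMod P.q))) =
      ofAdd ((P.n₂ : ℤ), (0 : ZMod P.q)) := by
    rw [emb_apply]; norm_num
  have e₂ : emb P.q P.m₂ P.x₂ (ofAdd ((1 : ℤ), (0 : ZMod P.q))) =
      ofAdd ((P.m₂ : ℤ), P.x₂) := by
    rw [emb_apply]; norm_num
  rw [e₁, e₂] at h
  have hsplit : (ofAdd ((P.m₂ : ℤ), P.x₂) : B P.q) =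
      ofAdd ((P.m₂ : ℤ), (0 : ZMod P.q)) * ofAdd ((0 : ℤ), P.x₂) := by
    apply Multiplicative.toAdd.injective
    simp
  calc P.T₂ * P.aelt ^ P.n₂ * P.T₂⁻¹ * P.aelt ^ (-P.m₂)
      = (P.T₂ * P.θ (ofAdd ((P.n₂ : ℤ), (0 : ZMod P.q))) * P.T₂⁻¹) * P.aelt ^ (-P.m₂) := by
        rw [P.aelt_zpow]
    _ = P.θ (ofAdd ((P.m₂ : ℤ), P.x₂)) * P.aelt ^ (-P.m₂) := by
        rw [θ]; exact congrArg (· * P.aelt ^ (-P.m₂)) h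
    _ = P.aelt ^ P.m₂ * P.ζ P.x₂ * P.aelt ^ (-P.m₂) := by
        rw [hsplit, map_mul, ← P.aelt_zpow]; rfl
    _ = P.aelt ^ P.m₂ * P.aelt ^ (-P.m₂) * P.ζ P.x₂ := by
        rw [mul_assoc, (P.central P.x₂ (P.aelt ^ (-P.m₂))).eq, ← mul_assoc]
    _ = P.ζ P.x₂ := by
        rw [← zpow_add, add_neg_cancel, zpow_zero, one_mul]

/-- The central subgroup generated by `ζ`. -/
noncomputable def Z : Subgroup P.D := (P.θ.comp
  (AddMonoidHom.toMultiplicative (AddMonoidHom.inr ℤ (ZMod P.q)))).range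

lemma mem_Z_iff (d : P.D) : d ∈ P.Z ↔ ∃ c : ZMod P.q, P.ζ c = d := by
  constructor
  · rintro ⟨c, rfl⟩
    exact ⟨toAdd c, rfl⟩
  · rintro ⟨c, rfl⟩
    exact ⟨ofAdd c, rfl⟩

instance : P.Z.Normal := by
  constructor
  intro x hx g
  rw [P.mem_Z_iff] at hx
  obtain ⟨c, rfl⟩ := hx
  rw [P.mem_Z_iff]
  refine ⟨c, ?_⟩
  have h := (P.central c g).eq
  calc P.ζ c = P.ζ c * g * g⁻¹ := by group
    _ = g * P.ζ c * g⁻¹ := by rw [h]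

/-- The quotient by the central subgroup. -/
noncomputable abbrev Q := P.D ⧸ P.Z

noncomputable def π : P.D →* P.Q := QuotientGroup.mk' P.Z

lemma π_ζ (c : ZMod P.q) : P.π (P.ζ c) = 1 := by
  rw [π, QuotientGroup.mk'_apply, QuotientGroup.eq_one_iff]
  rw [P.mem_Z_iff]
  exact ⟨c, rfl⟩

lemma exists_ζ_of_π_eq {d e : P.D} (h : P.π d = P.π e) : ∃ c, d = P.ζ c * e := by
  rw [π, QuotientGroup.mk'_eq_mk'] at h
  obtain ⟨w, hw, hde⟩ := h
  rw [P.mem_Z_iff] at hw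
  obtain ⟨c, rfl⟩ := hw
  refine ⟨-c, ?_⟩
  rw [← hde, ← (P.central c d).eq, ← mul_assoc, ← P.ζ_add, neg_add_cancel, P.ζ_zero, one_mul]


/-- `ζ` as a monoid hom on `Multiplicative (ZMod q)`. -/
noncomputable def ι : Multiplicative (ZMod P.q) →* P.D :=
  P.θ.comp (AddMonoidHom.toMultiplicative (AddMonoidHom.inr ℤ (ZMod P.q)))

lemma ι_apply (c : ZMod P.q) : P.ι (ofAdd c) = P.ζ c := rfl

/-- Multiplication hom exploiting centrality of `ζ`. -/
noncomputable def μ : Multiplicative (ZMod P.q) × P.D →* P.D :=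
  MonoidHom.noncommCoprod P.ι (MonoidHom.id _) (fun y d => P.central y.toAdd d)

lemma μ_apply (c : ZMod P.q) (d : P.D) : P.μ (ofAdd c, d) = P.ζ c * d := by
  rfl

/-- The master computation: conjugation-relator values of shifted lifts. -/
lemma conj_formula (n m : ℤ) (u s xv : ZMod P.q) (T av : P.D)
    (hrel : T * av ^ n * T⁻¹ * av ^ (-m) = P.ζ xv) :
    (P.ζ u * T) * (P.ζ s * av) ^ n * (P.ζ u * T)⁻¹ * (P.ζ s * av) ^ (-m)
      = P.ζ (xv + (n - m) • s) := by
  have hp : ((ofAdd u, T) * (ofAdd s, av) ^ n * (ofAdd u, T)⁻¹ * (ofAdd s, av) ^ (-m)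
      : Multiplicative (ZMod P.q) × P.D)
      = (ofAdd ((n - m) • s), T * av ^ n * T⁻¹ * av ^ (-m)) := by
    refine Prod.ext ?_ ?_
    · simp only [Prod.fst_mul, Prod.fst_inv, Prod.pow_fst]
      apply Multiplicative.toAdd.injective
      simp only [toAdd_mul, toAdd_zpow, toAdd_inv, toAdd_ofAdd]
      module
    · simp only [Prod.snd_mul, Prod.snd_inv, Prod.pow_snd]
  calc (P.ζ u * T) * (P.ζ s * av) ^ n * (P.ζ u * T)⁻¹ * (P.ζ s * av) ^ (-m)
      = P.μ ((ofAdd u, T) * (ofAdd s, av) ^ n * (ofAdd u, T)⁻¹ * (ofAdd s, av) ^ (-m)) := by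
        rw [map_mul, map_mul, map_mul, map_zpow, map_zpow, map_inv, P.μ_apply, P.μ_apply]
    _ = P.ζ ((n - m) • s) * P.ζ xv := by rw [hp, ← hrel]; exact P.μ_apply _ _
    _ = P.ζ (xv + (n - m) • s) := by rw [← P.ζ_add, add_comm]

end Params
end GBSAux

namespace GBSAux
namespace Params
variable (P : Params)

/-- Images of the three generators. -/
noncomputable def gens : Fin 3 → P.D := ![P.aelt, P.T₁, P.T₂]

lemma lift_rel₁ : P.π (P.T₁ * P.aelt ^ P.n₁ * P.T₁⁻¹ * P.aelt ^ (-P.m₁)) = 1 := by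
  rw [P.rel₁]; exact P.π_ζ _

lemma lift_rel₂ : P.π (P.T₂ * P.aelt ^ P.n₂ * P.T₂⁻¹ * P.aelt ^ (-P.m₂)) = 1 := by
  rw [P.rel₂]; exact P.π_ζ _

/-- The homomorphism from the GBS group to the quotient `Q`. -/
noncomputable def ψ : PresentedGroup (roseRel P.n₁ P.m₁ P.n₂ P.m₂) →* P.Q :=
  PresentedGroup.toGroup (f := fun i => P.π (P.gens i)) (by
    rintro r (rfl | rfl)
    · have : FreeGroup.lift (fun i => P.π (P.gens i))
          (FreeGroup.of 1 * FreeGroup.of 0 ^ P.n₁ * (FreeGroup.of 1)⁻¹ *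
            FreeGroup.of 0 ^ (-P.m₁)) =
          P.π (P.T₁ * P.aelt ^ P.n₁ * P.T₁⁻¹ * P.aelt ^ (-P.m₁)) := by
        simp only [map_mul, map_zpow, map_inv, FreeGroup.lift_apply_of, map_one]
        rfl
      rw [this, P.lift_rel₁]
    · have : FreeGroup.lift (fun i => P.π (P.gens i))
          (FreeGroup.of 2 * FreeGroup.of 0 ^ P.n₂ * (FreeGroup.of 2)⁻¹ *
            FreeGroup.of 0 ^ (-P.m₂)) =
          P.π (P.T₂ * P.aelt ^ P.n₂ * P.T₂⁻¹ * P.aelt ^ (-P.m₂)) := by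
        simp only [map_mul, map_zpow, map_inv, FreeGroup.lift_apply_of, map_one]
        rfl
      rw [this, P.lift_rel₂])

lemma ψ_of (i : Fin 3) : P.ψ (PresentedGroup.of i) = P.π (P.gens i) :=
  PresentedGroup.toGroup.of _


variable {P : Params}

section Key

open groupCohomology

theorem key (P : Params)
    (hcon : ∀ s : ZMod P.q,
      ¬(P.x₁ + (P.n₁ - P.m₁) • s = 0 ∧ P.x₂ + (P.n₂ - P.m₂) • s = 0)) :
    ¬ Subsingleton (groupCohomology
        (Rep.trivial (ZMod P.q) (PresentedGroup (roseRel P.n₁ P.m₁ P.n₂ P.m₂))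
          (ZMod P.q)) 2) := by
  intro hss
  set Γ := PresentedGroup (roseRel P.n₁ P.m₁ P.n₂ P.m₂) with hΓ
  -- the lift of `ψ` by choice
  set τ : Γ → P.D := fun g => Quotient.out (P.ψ g) with hτ
  have hπτ : ∀ g, P.π (τ g) = P.ψ g := by
    intro g
    rw [hτ]
    exact QuotientGroup.out_eq' _
  -- the 2-cocycle
  set F0 : Γ × Γ → ZMod P.q :=
    fun p => Function.invFun P.ζ (τ p.1 * τ p.2 * (τ (p.1 * p.2))⁻¹) with hF0
  have hζF : ∀ g h : Γ, P.ζ (F0 (g, h)) = τ g * τ h * (τ (g * h))⁻¹ := by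
    intro g h
    have hπ1 : P.π (τ g * τ h * (τ (g * h))⁻¹) = 1 := by
      rw [map_mul, map_mul, map_inv, hπτ, hπτ, hπτ, map_mul]
      group
    have hmem : τ g * τ h * (τ (g * h))⁻¹ ∈ P.Z := by
      rwa [Params.π, QuotientGroup.mk'_apply, QuotientGroup.eq_one_iff] at hπ1
    rw [P.mem_Z_iff] at hmem
    exact Function.invFun_eq hmem
  have hτmul : ∀ g h : Γ, τ g * τ h = P.ζ (F0 (g, h)) * τ (g * h) := by
    intro g h
    rw [hζF]
    group
  -- cocycle identity
  have hcoc : ∀ g h j : Γ, F0 (g, h) + F0 (g * h, j) = F0 (h, j) + F0 (g, h * j) := by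
    intro g h j
    apply P.ζ_injective
    have e1 : τ g * τ h * τ j = P.ζ (F0 (g, h)) * (P.ζ (F0 (g * h, j)) * τ (g * h * j)) := by
      rw [hτmul g h, mul_assoc, hτmul (g * h) j]
    have e2 : τ g * τ h * τ j = P.ζ (F0 (h, j)) * (P.ζ (F0 (g, h * j)) * τ (g * h * j)) := by
      rw [mul_assoc, hτmul h j, ← mul_assoc, ← (P.central (F0 (h, j)) (τ g)).eq, mul_assoc,
        hτmul g (h * j), mul_assoc g h j]
    have e3 := e1.symm.trans e2
    rw [← mul_assoc, ← mul_assoc] at e3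
    have e4 := mul_right_cancel e3
    rwa [← P.ζ_add, ← P.ζ_add] at e4
  have hF : F0 ∈ cocycles₂ (Rep.trivial (ZMod P.q) Γ (ZMod P.q)) := by
    rw [mem_cocycles₂_iff]
    intro g h j
    rw [Rep.trivial_ρ_apply, add_comm (F0 (g * h, j)) (F0 (g, h))]
    exact hcoc g h j
  -- it is a coboundary by the subsingleton assumption
  have hH2 : Subsingleton (H2 (Rep.trivial (ZMod P.q) Γ (ZMod P.q))) := hss
  have hb : F0 ∈ coboundaries₂ (Rep.trivial (ZMod P.q) Γ (ZMod P.q)) := by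
    have h0 : H2π (Rep.trivial (ZMod P.q) Γ (ZMod P.q)) ⟨F0, hF⟩ = 0 :=
      @Subsingleton.elim _ hH2 _ _
    exact (H2π_eq_zero_iff _).mp h0
  obtain ⟨x, hx⟩ := hb
  have hxF : ∀ g h : Γ, x h - x (g * h) + x g = F0 (g, h) := by
    intro g h
    have := congrFun hx (g, h)
    simpa [d₁₂_hom_apply] using this
  -- build the lifting homomorphism
  set Φ0 : Γ → P.D := fun g => P.ζ (-(x g)) * τ g with hΦ0
  have hΦmul : ∀ g h : Γ, Φ0 (g * h) = Φ0 g * Φ0 h := by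
    intro g h
    have e1 : Φ0 g * Φ0 h = P.ζ (-(x g)) * (P.ζ (-(x h)) * (τ g * τ h)) := by
      rw [hΦ0]
      dsimp only
      rw [mul_assoc, ← mul_assoc (τ g), (P.central (-(x h)) (τ g)).symm.eq, mul_assoc]
    rw [e1, hτmul g h, ← mul_assoc, ← mul_assoc, ← P.ζ_add, ← P.ζ_add]
    rw [hΦ0]
    dsimp only
    congr 1
    rw [← hxF g h]
    ring_nf
  set Φ : Γ →* P.D := MonoidHom.mk' Φ0 (fun g h => hΦmul g h) with hΦ
  have hπΦ : ∀ g, P.π (Φ g) = P.ψ g := by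
    intro g
    rw [hΦ]
    show P.π (Φ0 g) = P.ψ g
    rw [hΦ0]
    dsimp only
    rw [map_mul, P.π_ζ, one_mul, hπτ]
  -- decompose the images of the generators
  have hdec : ∀ i : Fin 3, ∃ c, Φ (PresentedGroup.of i) = P.ζ c * P.gens i := by
    intro i
    apply P.exists_ζ_of_π_eq
    rw [hπΦ, P.ψ_of]
  obtain ⟨sa, hsa⟩ := hdec 0
  obtain ⟨s1, hs1⟩ := hdec 1
  obtain ⟨s2, hs2⟩ := hdec 2
  have hga : P.gens 0 = P.aelt := rfl
  have hg1 : P.gens 1 = P.T₁ := rfl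
  have hg2 : P.gens 2 = P.T₂ := rfl
  rw [hga] at hsa
  rw [hg1] at hs1
  rw [hg2] at hs2
  -- the relators hold in Γ
  have hrelΓ : ∀ (i : Fin 3) (n m : ℤ),
      (FreeGroup.of i * FreeGroup.of 0 ^ n * (FreeGroup.of i)⁻¹ * FreeGroup.of 0 ^ (-m)) ∈
        Subgroup.normalClosure (roseRel P.n₁ P.m₁ P.n₂ P.m₂) →
      (PresentedGroup.of i : Γ) * (PresentedGroup.of 0 : Γ) ^ n *
        (PresentedGroup.of i : Γ)⁻¹ * (PresentedGroup.of 0 : Γ) ^ (-m) = 1 := by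
    intro i n m hm
    have : (PresentedGroup.of i : Γ) * (PresentedGroup.of 0 : Γ) ^ n *
        (PresentedGroup.of i : Γ)⁻¹ * (PresentedGroup.of 0 : Γ) ^ (-m) =
        PresentedGroup.mk (roseRel P.n₁ P.m₁ P.n₂ P.m₂)
          (FreeGroup.of i * FreeGroup.of 0 ^ n * (FreeGroup.of i)⁻¹ * FreeGroup.of 0 ^ (-m)) := by
      rw [map_mul, map_mul, map_mul, map_zpow, map_zpow, map_inv]
      rfl
    rw [this]
    exact (QuotientGroup.eq_one_iff _).mpr hm
  have hrel1 : (PresentedGroup.of 1 : Γ) * (PresentedGroup.of 0 : Γ) ^ P.n₁ *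
      (PresentedGroup.of 1 : Γ)⁻¹ * (PresentedGroup.of 0 : Γ) ^ (-P.m₁) = 1 :=
    hrelΓ 1 P.n₁ P.m₁ (Subgroup.subset_normalClosure (by left; rfl))
  have hrel2 : (PresentedGroup.of 2 : Γ) * (PresentedGroup.of 0 : Γ) ^ P.n₂ *
      (PresentedGroup.of 2 : Γ)⁻¹ * (PresentedGroup.of 0 : Γ) ^ (-P.m₂) = 1 :=
    hrelΓ 2 P.n₂ P.m₂ (Subgroup.subset_normalClosure (by right; rfl))
  -- evaluate Φ on the relators
  have h1 : P.ζ (P.x₁ + (P.n₁ - P.m₁) • sa) = 1 := by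
    have := congrArg Φ hrel1
    rw [map_mul, map_mul, map_mul, map_zpow, map_zpow, map_inv, map_one] at this
    rw [hsa, hs1, P.conj_formula P.n₁ P.m₁ s1 sa P.x₁ P.T₁ P.aelt P.rel₁] at this
    exact this
  have h2 : P.ζ (P.x₂ + (P.n₂ - P.m₂) • sa) = 1 := by
    have := congrArg Φ hrel2
    rw [map_mul, map_mul, map_mul, map_zpow, map_zpow, map_inv, map_one] at this
    rw [hsa, hs2, P.conj_formula P.n₂ P.m₂ s2 sa P.x₂ P.T₂ P.aelt P.rel₂] at this
    exact this
  refine hcon sa ⟨?_, ?_⟩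
  · apply P.ζ_injective
    rw [P.ζ_zero, h1]
  · apply P.ζ_injective
    rw [P.ζ_zero, h2]

end Key

end Params
end GBSAux


/-- Computation in the second case of the proof of the paper's Lemma 5.3: for a
generalised Baumslag–Solitar group over a rose with two loops, `H²` with coefficients in
the trivial one-dimensional representation over `𝔽_q` is nonzero, for every prime `q`. -/
theorem GBSRoseTwo_H2_trivial_coefficients_nonzero
    (n₁ m₁ n₂ m₂ : ℤ) (hn₁ : n₁ ≠ 0) (hm₁ : m₁ ≠ 0) (hn₂ : n₂ ≠ 0) (hm₂ : m₂ ≠ 0)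
    (q : ℕ) (hq : q.Prime) :
    ¬ Subsingleton
        (groupCohomology
          (Rep.trivial (ZMod q) (GBSRoseTwo n₁ m₁ n₂ m₂) (ZMod q)) 2) := by
  haveI : Fact q.Prime := ⟨hq⟩
  by_cases hc : ((n₁ - m₁ : ℤ) : ZMod q) = 0 ∧ ((n₂ - m₂ : ℤ) : ZMod q) ≠ 0
  · exact GBSAux.Params.key ⟨q, n₁, m₁, n₂, m₂, 1, 0, hn₁, hm₁, hn₂, hm₂⟩ (by
      intro s hs
      obtain ⟨e1, e2⟩ := hs
      rw [zsmul_eq_mul, hc.1, zero_mul, add_zero] at e1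
      exact one_ne_zero e1)
  · exact GBSAux.Params.key ⟨q, n₁, m₁, n₂, m₂, 0, 1, hn₁, hm₁, hn₂, hm₂⟩ (by
      intro s hs
      obtain ⟨e1, e2⟩ := hs
      rw [zsmul_eq_mul, zero_add] at e1
      rw [zsmul_eq_mul] at e2
      by_cases hd2 : ((n₂ - m₂ : ℤ) : ZMod q) = 0
      · rw [hd2, zero_mul, add_zero] at e2
        exact one_ne_zero e2
      · have hd1 : ((n₁ - m₁ : ℤ) : ZMod q) ≠ 0 := fun h => hc ⟨h, hd2⟩
        have hs0 : s = 0 := by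
          rcases mul_eq_zero.mp e1 with h | h
          · exact absurd h hd1
          · exact h
        rw [hs0, mul_zero, add_zero] at e2
        exact one_ne_zero e2)
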